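/- Let A, Q be n×n real matrices and B₀, Δ_B n×m real matrices with B := B₀ + Δ_B; let R be an m×m real matrix. Assume: Q and R are symmetric positive definite with Q − q·I_n ⪰ 0 and R − r·I_m ⪰ 0 for reals q, r > 0; ‖Δ_B‖ ≤ ε for a real ε ≥ 0; P₀ is a symmetric positive definite n×n matrix satisfying the nominal algebraic Riccati equation Aᵀ P₀ + P₀ A + Q − P₀ B₀ R⁻¹ B₀ᵀ P₀ = 0; K₀ := −R⁻¹ B₀ᵀ P₀; and ε < √(q·r)/(2·tr(P₀)). Set η := 1 − 2ε·tr(P₀)/√(q·r). Then: (i) A + B K₀ is Hurwitz (every eigenvalue of its complexification has strictly negative real part); and (ii) for every symmetric positive semidefinite n×n matrix W satisfying (A + B K₀) W + W (A + B K₀)ᵀ + I_n = 0, the LQR cost satisfies tr((Q + K₀ᵀ R K₀) W) ≤ tr(P₀)/η. -/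

import Mathlib

open Matrix
open scoped Matrix.Norms.L2Operator
open scoped MatrixOrder

set_option linter.unusedSectionVars false
set_option linter.unusedVariables false
set_option maxHeartbeats 1000000
variable {ι : Type*} [Fintype ι] [DecidableEq ι]

lemma dot_self_nonneg (v : ι → ℝ) : 0 ≤ v ⬝ᵥ v :=
  Finset.sum_nonneg fun i _ => mul_self_nonneg _

lemma dot_cs (u p : ι → ℝ) : u ⬝ᵥ p ≤ Real.sqrt (u ⬝ᵥ u) * Real.sqrt (p ⬝ᵥ p) := by
  have h := Finset.sum_mul_sq_le_sq_mul_sq Finset.univ u p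
  have h2 : (u ⬝ᵥ p) ^ 2 ≤ (u ⬝ᵥ u) * (p ⬝ᵥ p) := by
    simpa [dotProduct, sq] using h
  calc u ⬝ᵥ p ≤ |u ⬝ᵥ p| := le_abs_self _
    _ = Real.sqrt ((u ⬝ᵥ p) ^ 2) := (Real.sqrt_sq_eq_abs _).symm
    _ ≤ Real.sqrt ((u ⬝ᵥ u) * (p ⬝ᵥ p)) := Real.sqrt_le_sqrt h2
    _ = _ := Real.sqrt_mul (dot_self_nonneg u) _

lemma psd_quad_le_trace {M : Matrix ι ι ℝ} (hM : M.PosSemidef) (x : ι → ℝ) :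
    x ⬝ᵥ (M *ᵥ x) ≤ M.trace * (x ⬝ᵥ x) := by
  obtain ⟨B, hB⟩ : ∃ B : Matrix ι ι ℝ, M = Bᴴ * B := by
    obtain ⟨B, hB⟩ := CStarAlgebra.nonneg_iff_eq_star_mul_self.mp hM.nonneg
    exact ⟨B, hB⟩
  subst hB
  have h1 : x ⬝ᵥ ((Bᴴ * B) *ᵥ x) = (B *ᵥ x) ⬝ᵥ (B *ᵥ x) := by
    rw [← mulVec_mulVec, dotProduct_mulVec, vecMul_conjTranspose]
    simp
  rw [h1]
  have htr : (Bᴴ * B).trace = ∑ i, ∑ j, B i j * B i j := by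
    rw [Matrix.trace]
    simp only [Matrix.diag, Matrix.mul_apply, Matrix.conjTranspose_apply, star_trivial]
    rw [Finset.sum_comm]
  rw [htr, Finset.sum_mul]
  refine Finset.sum_le_sum fun i _ => ?_
  have := Finset.sum_mul_sq_le_sq_mul_sq Finset.univ (fun j => B i j) x
  simpa [dotProduct, Matrix.mulVec, sq] using this

lemma psd_trace_nonneg {M : Matrix ι ι ℝ} (hM : M.PosSemidef) : 0 ≤ M.trace := by
  refine Finset.sum_nonneg fun i _ => ?_
  have := hM.dotProduct_mulVec_nonneg (Pi.single i 1)
  simpa [dotProduct, Matrix.mulVec, Pi.single_apply] using this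

lemma psd_smul_one_sub {M : Matrix ι ι ℝ} (hM : M.PosSemidef) {c : ℝ}
    (hc : ∀ x : ι → ℝ, x ⬝ᵥ (M *ᵥ x) ≤ c * (x ⬝ᵥ x)) :
    (c • (1 : Matrix ι ι ℝ) - M).PosSemidef := by
  refine Matrix.PosSemidef.of_dotProduct_mulVec_nonneg ?_ ?_
  · show _ = _
    simp only [conjTranspose_sub, conjTranspose_smul, star_trivial, conjTranspose_one, hM.1.eq]
  · intro x
    have := hc x
    simp only [star_trivial, sub_mulVec, dotProduct_sub, Matrix.smul_mulVec,
      one_mulVec, dotProduct_smul, smul_eq_mul]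
    linarith

lemma psd_sq_quad {M : Matrix ι ι ℝ} (hM : M.PosSemidef) (x : ι → ℝ) :
    x ⬝ᵥ ((M * M) *ᵥ x) ≤ M.trace * (x ⬝ᵥ (M *ᵥ x)) := by
  set c := M.trace with hc
  set S := CFC.sqrt M with hSdef
  have hS : S * S = M := CFC.sqrt_mul_sqrt_self M hM.nonneg
  have hSherm : Sᴴ = S := (CFC.sqrt_nonneg M).posSemidef.1
  have hsub : (c • (1 : Matrix ι ι ℝ) - M).PosSemidef :=
    psd_smul_one_sub hM (fun x => psd_quad_le_trace hM x)
  have hconj := hsub.conjTranspose_mul_mul_same S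
  have hmat : Sᴴ * (c • (1 : Matrix ι ι ℝ) - M) * S = c • M - M * M := by
    rw [hSherm, ← hS]
    noncomm_ring
  rw [hmat] at hconj
  have := hconj.dotProduct_mulVec_nonneg x
  simp only [star_trivial, sub_mulVec, dotProduct_sub, Matrix.smul_mulVec,
    dotProduct_smul, smul_eq_mul] at this
  linarith

lemma psd_mulVec_sq {M : Matrix ι ι ℝ} (hM : M.PosSemidef) (x : ι → ℝ) :
    (M *ᵥ x) ⬝ᵥ (M *ᵥ x) ≤ (M.trace * M.trace) * (x ⬝ᵥ x) := by
  have hsym : Mᵀ = M := by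
    rw [← Matrix.conjTranspose_eq_transpose_of_trivial]; exact hM.1
  have h1 : x ⬝ᵥ ((M * M) *ᵥ x) = (M *ᵥ x) ⬝ᵥ (M *ᵥ x) := by
    rw [← mulVec_mulVec, dotProduct_mulVec]
    nth_rewrite 1 [← hsym]
    rw [vecMul_transpose]
  rw [← h1]
  calc x ⬝ᵥ ((M * M) *ᵥ x) ≤ M.trace * (x ⬝ᵥ (M *ᵥ x)) := psd_sq_quad hM x
    _ ≤ M.trace * (M.trace * (x ⬝ᵥ x)) := by
        have h2 := psd_quad_le_trace hM x
        have h3 := psd_trace_nonneg hM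
        nlinarith
    _ = _ := by ring

lemma psd_trace_mul_nonneg {X W : Matrix ι ι ℝ} (hX : X.PosSemidef) (hW : W.PosSemidef) :
    0 ≤ (X * W).trace := by
  obtain ⟨B, hB⟩ : ∃ B : Matrix ι ι ℝ, X = Bᴴ * B := by
    obtain ⟨B, hB⟩ := CStarAlgebra.nonneg_iff_eq_star_mul_self.mp hX.nonneg
    exact ⟨B, hB⟩
  subst hB
  rw [← Matrix.trace_mul_cycle B W Bᴴ]
  exact psd_trace_nonneg ((hW.mul_mul_conjTranspose_same B))
variable {ι : Type*} [Fintype ι] [DecidableEq ι]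

lemma re_quad_eq (M : Matrix ι ι ℝ) (v : ι → ℂ) :
    (star v ⬝ᵥ ((M.map Complex.ofReal) *ᵥ v)).re =
      (fun i => (v i).re) ⬝ᵥ (M *ᵥ fun i => (v i).re) +
      (fun i => (v i).im) ⬝ᵥ (M *ᵥ fun i => (v i).im) := by
  simp only [dotProduct, Matrix.mulVec, Pi.star_apply, Matrix.map_apply,
    Complex.re_sum, Finset.mul_sum, Finset.sum_mul]
  rw [← Finset.sum_add_distrib]
  refine Finset.sum_congr rfl fun i _ => ?_
  rw [← Finset.sum_add_distrib]
  refine Finset.sum_congr rfl fun j _ => ?_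
  simp only [Complex.mul_re, Complex.mul_im, RCLike.star_def, Complex.conj_re,
    Complex.conj_im, Complex.ofReal_re, Complex.ofReal_im]
  ring

lemma pd_complex_quad {M : Matrix ι ι ℝ} (hM : M.PosDef) {v : ι → ℂ} (hv : v ≠ 0) :
    0 < (star v ⬝ᵥ ((M.map Complex.ofReal) *ᵥ v)).re := by
  rw [re_quad_eq]
  set a : ι → ℝ := fun i => (v i).re
  set b : ι → ℝ := fun i => (v i).im
  have hab : a ≠ 0 ∨ b ≠ 0 := by
    by_contra h
    push_neg at h
    apply hv
    funext i
    have ha := congrFun h.1 i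
    have hb := congrFun h.2 i
    exact Complex.ext ha hb
  rcases hab with h | h
  · have := hM.dotProduct_mulVec_pos h
    have h2 := hM.posSemidef.dotProduct_mulVec_nonneg b
    simp only [star_trivial] at this h2
    linarith
  · have := hM.dotProduct_mulVec_pos h
    have h2 := hM.posSemidef.dotProduct_mulVec_nonneg a
    simp only [star_trivial] at this h2
    linarith

lemma spectrum_exists_eigenvector {M : Matrix ι ι ℂ} {μ : ℂ}
    (h : μ ∈ spectrum ℂ M) : ∃ v : ι → ℂ, v ≠ 0 ∧ M *ᵥ v = μ • v := by
  rw [spectrum.mem_iff] at h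
  have hdet : (algebraMap ℂ (Matrix ι ι ℂ) μ - M).det = 0 := by
    by_contra hd
    exact h ((Matrix.isUnit_iff_isUnit_det _).mpr (isUnit_iff_ne_zero.mpr hd))
  obtain ⟨v, hv0, hv⟩ := (Matrix.exists_mulVec_eq_zero_iff).mpr hdet
  refine ⟨v, hv0, ?_⟩
  have : (μ • (1 : Matrix ι ι ℂ) - M) *ᵥ v = 0 := by
    rwa [show algebraMap ℂ (Matrix ι ι ℂ) μ = μ • 1 from Algebra.algebraMap_eq_smul_one μ] at hv
  rw [sub_mulVec, Matrix.smul_mulVec, one_mulVec, sub_eq_zero] at this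
  exact this.symm

open scoped Matrix.Norms.L2Operator

lemma euclid_norm_eq (v : ι → ℝ) :
    ‖(EuclideanSpace.equiv ι ℝ).symm v‖ = Real.sqrt (v ⬝ᵥ v) := by
  rw [EuclideanSpace.norm_eq]
  congr 1
  simp [dotProduct, Real.norm_eq_abs, sq, abs_mul_abs_self]


/-- A real square matrix is Hurwitz if every eigenvalue of its complexification
has strictly negative real part. -/
def Matrix.IsHurwitz {n : ℕ} (A : Matrix (Fin n) (Fin n) ℝ) : Prop :=
  ∀ μ ∈ spectrum ℂ (A.map (Complex.ofReal)), μ.re < 0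

/-- Proposition 1: robustness of the certainty-equivalence LQR controller to
uncertainty `Δ_B` in the input matrix: the gain `K₀` stabilizes the true system
and the LQR cost satisfies `tr((Q + K₀ᵀ R K₀) W) ≤ tr(P₀)/η`. -/
theorem certainty_equivalence_lqr_robust_uncertainty {n m : ℕ}
    (A Q : Matrix (Fin n) (Fin n) ℝ)
    (B₀ ΔB : Matrix (Fin n) (Fin m) ℝ)
    (R : Matrix (Fin m) (Fin m) ℝ)
    (q r : ℝ) (hq : 0 < q) (hr : 0 < r)
    (hQ : Q.PosDef) (hR : R.PosDef)
    (hQq : (Q - q • (1 : Matrix (Fin n) (Fin n) ℝ)).PosSemidef)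
    (hRr : (R - r • (1 : Matrix (Fin m) (Fin m) ℝ)).PosSemidef)
    (ε : ℝ) (hε : 0 ≤ ε) (hΔB : ‖ΔB‖ ≤ ε)
    (P₀ : Matrix (Fin n) (Fin n) ℝ) (hP₀ : P₀.PosDef)
    (hARE : Aᵀ * P₀ + P₀ * A + Q - P₀ * B₀ * R⁻¹ * B₀ᵀ * P₀ = 0)
    (K₀ : Matrix (Fin m) (Fin n) ℝ) (hK₀ : K₀ = -(R⁻¹ * B₀ᵀ * P₀))
    (hεsmall : ε < Real.sqrt (q * r) / (2 * P₀.trace))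
    (η : ℝ) (hη : η = 1 - 2 * ε * P₀.trace / Real.sqrt (q * r)) :
    (A + (B₀ + ΔB) * K₀).IsHurwitz ∧
      ∀ W : Matrix (Fin n) (Fin n) ℝ, W.PosSemidef →
        (A + (B₀ + ΔB) * K₀) * W + W * (A + (B₀ + ΔB) * K₀)ᵀ + 1 = 0 →
        ((Q + K₀ᵀ * R * K₀) * W).trace ≤ P₀.trace / η := by
  -- basic symmetry facts
  have hQsym : Qᵀ = Q := by
    rw [← Matrix.conjTranspose_eq_transpose_of_trivial]; exact hQ.1
  have hRsym : Rᵀ = R := by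
    rw [← Matrix.conjTranspose_eq_transpose_of_trivial]; exact hR.1
  have hPsym : P₀ᵀ = P₀ := by
    rw [← Matrix.conjTranspose_eq_transpose_of_trivial]; exact hP₀.1
  have hRinvsym : (R⁻¹)ᵀ = R⁻¹ := by rw [Matrix.transpose_nonsing_inv, hRsym]
  have hRunit : IsUnit R.det := isUnit_iff_ne_zero.mpr hR.det_pos.ne'
  have hRinvR : R⁻¹ * R = 1 := Matrix.nonsing_inv_mul R hRunit
  -- trace positivity
  have hT : 0 < P₀.trace := by
    rcases Nat.eq_zero_or_pos n with h0 | h0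
    · exfalso
      subst h0
      have htr0 : P₀.trace = 0 := by simp [Matrix.trace]
      rw [htr0] at hεsmall
      norm_num at hεsmall
      linarith
    · have hdiag : ∀ i, 0 < P₀ i i := fun i => by
        have hne : (Pi.single i 1 : Fin n → ℝ) ≠ 0 := fun h => by
          have h1 := congrFun h i
          rw [Pi.single_eq_same] at h1
          exact one_ne_zero h1
        have h := hP₀.dotProduct_mulVec_pos hne
        simpa [dotProduct, Matrix.mulVec, Pi.single_apply] using h
      have hne : (Finset.univ : Finset (Fin n)).Nonempty := by
        have : Nonempty (Fin n) := Fin.pos_iff_nonempty.mp h0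
        exact Finset.univ_nonempty
      exact Finset.sum_pos (fun i _ => hdiag i) hne
  have hsqrt_pos : 0 < Real.sqrt (q * r) := Real.sqrt_pos.mpr (mul_pos hq hr)
  have hεT : 2 * ε * P₀.trace < Real.sqrt (q * r) := by
    rw [lt_div_iff₀ (by positivity)] at hεsmall
    linarith
  have hη0 : 0 < η := by
    rw [hη, sub_pos, div_lt_one hsqrt_pos]
    exact hεT
  have hη1 : 1 - η = 2 * ε * P₀.trace / Real.sqrt (q * r) := by rw [hη]; ring
  have hη1nn : 0 ≤ 1 - η := by
    rw [hη1]; positivity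
  -- abbreviations
  set Ac := A + (B₀ + ΔB) * K₀ with hAc
  set S := Q + K₀ᵀ * R * K₀ with hSdef
  set C := K₀ᵀ * ΔBᵀ * P₀ + P₀ * ΔB * K₀ with hCdef
  -- Riccati rearranged
  have hAP : Aᵀ * P₀ + P₀ * A = P₀ * B₀ * R⁻¹ * B₀ᵀ * P₀ - Q :=
    eq_sub_of_add_eq (sub_eq_zero.mp hARE)
  have hKT : K₀ᵀ = -(P₀ * B₀ * R⁻¹) := by
    rw [hK₀]
    simp only [Matrix.transpose_neg, Matrix.transpose_mul, Matrix.transpose_transpose,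
      hRinvsym, hPsym]
    rw [Matrix.mul_assoc]
  have hG : K₀ᵀ * R * K₀ = P₀ * B₀ * R⁻¹ * B₀ᵀ * P₀ := by
    rw [hKT, hK₀]
    calc -(P₀ * B₀ * R⁻¹) * R * -(R⁻¹ * B₀ᵀ * P₀)
        = P₀ * B₀ * (R⁻¹ * R) * (R⁻¹ * (B₀ᵀ * P₀)) := by
          simp only [Matrix.neg_mul, Matrix.mul_neg, neg_neg, Matrix.mul_assoc]
      _ = P₀ * B₀ * R⁻¹ * B₀ᵀ * P₀ := by
          rw [hRinvR]
          simp only [Matrix.mul_one, Matrix.mul_assoc]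
  have h3 : K₀ᵀ * B₀ᵀ * P₀ = -(P₀ * B₀ * R⁻¹ * B₀ᵀ * P₀) := by
    rw [hKT]; simp only [Matrix.neg_mul, Matrix.mul_assoc]
  have h4 : P₀ * (B₀ * K₀) = -(P₀ * B₀ * R⁻¹ * B₀ᵀ * P₀) := by
    rw [hK₀]; simp only [Matrix.mul_neg, Matrix.mul_assoc]
  -- key Lyapunov identity
  have hkey : Acᵀ * P₀ + P₀ * Ac = C - S := by
    calc Acᵀ * P₀ + P₀ * Ac
        = (Aᵀ * P₀ + P₀ * A) + ((K₀ᵀ * B₀ᵀ * P₀) + P₀ * (B₀ * K₀))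
            + (K₀ᵀ * ΔBᵀ * P₀ + P₀ * ΔB * K₀) := by
          rw [hAc]
          simp only [Matrix.transpose_add, Matrix.transpose_mul, Matrix.add_mul,
            Matrix.mul_add, Matrix.mul_assoc]
          abel
      _ = C - S := by
          rw [hAP, h3, h4, hCdef, hSdef, hG]
          abel
  -- quadratic form expansions
  have hCquad : ∀ x : Fin n → ℝ,
      x ⬝ᵥ (C *ᵥ x) = 2 * ((ΔB *ᵥ (K₀ *ᵥ x)) ⬝ᵥ (P₀ *ᵥ x)) := by
    intro x
    rw [hCdef, Matrix.add_mulVec, dotProduct_add]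
    have e1 : x ⬝ᵥ ((K₀ᵀ * ΔBᵀ * P₀) *ᵥ x) = (ΔB *ᵥ (K₀ *ᵥ x)) ⬝ᵥ (P₀ *ᵥ x) := by
      rw [← Matrix.mulVec_mulVec, ← Matrix.mulVec_mulVec, Matrix.dotProduct_mulVec,
        Matrix.vecMul_transpose, Matrix.dotProduct_mulVec, Matrix.vecMul_transpose]
    have e2 : x ⬝ᵥ ((P₀ * ΔB * K₀) *ᵥ x) = (ΔB *ᵥ (K₀ *ᵥ x)) ⬝ᵥ (P₀ *ᵥ x) := by
      rw [← Matrix.mulVec_mulVec, ← Matrix.mulVec_mulVec, Matrix.dotProduct_mulVec]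
      nth_rewrite 1 [← hPsym]
      rw [Matrix.vecMul_transpose, dotProduct_comm]
    rw [e1, e2]; ring
  have hSquad : ∀ x : Fin n → ℝ,
      x ⬝ᵥ (S *ᵥ x) = x ⬝ᵥ (Q *ᵥ x) + (K₀ *ᵥ x) ⬝ᵥ (R *ᵥ (K₀ *ᵥ x)) := by
    intro x
    rw [hSdef, Matrix.add_mulVec, dotProduct_add]
    congr 1
    rw [← Matrix.mulVec_mulVec, ← Matrix.mulVec_mulVec, Matrix.dotProduct_mulVec,
      Matrix.vecMul_transpose]
  have hQlb : ∀ x : Fin n → ℝ, q * (x ⬝ᵥ x) ≤ x ⬝ᵥ (Q *ᵥ x) := by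
    intro x
    have h := hQq.dotProduct_mulVec_nonneg x
    simp only [star_trivial, Matrix.sub_mulVec, dotProduct_sub, Matrix.smul_mulVec,
      Matrix.one_mulVec, dotProduct_smul, smul_eq_mul] at h
    linarith
  have hRlb : ∀ y : Fin m → ℝ, r * (y ⬝ᵥ y) ≤ y ⬝ᵥ (R *ᵥ y) := by
    intro y
    have h := hRr.dotProduct_mulVec_nonneg y
    simp only [star_trivial, Matrix.sub_mulVec, dotProduct_sub, Matrix.smul_mulVec,
      Matrix.one_mulVec, dotProduct_smul, smul_eq_mul] at h
    linarith
  have hop : ∀ v : Fin m → ℝ,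
      Real.sqrt ((ΔB *ᵥ v) ⬝ᵥ (ΔB *ᵥ v)) ≤ ε * Real.sqrt (v ⬝ᵥ v) := by
    intro v
    have h1 := ΔB.l2_opNorm_mulVec ((EuclideanSpace.equiv (Fin m) ℝ).symm v)
    rw [euclid_norm_eq, euclid_norm_eq] at h1
    calc Real.sqrt ((ΔB *ᵥ v) ⬝ᵥ (ΔB *ᵥ v)) ≤ ‖ΔB‖ * Real.sqrt (v ⬝ᵥ v) := h1
      _ ≤ ε * Real.sqrt (v ⬝ᵥ v) :=
          mul_le_mul_of_nonneg_right hΔB (Real.sqrt_nonneg _)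
  have hPv : ∀ x : Fin n → ℝ,
      Real.sqrt ((P₀ *ᵥ x) ⬝ᵥ (P₀ *ᵥ x)) ≤ P₀.trace * Real.sqrt (x ⬝ᵥ x) := by
    intro x
    have h1 := psd_mulVec_sq hP₀.posSemidef x
    calc Real.sqrt ((P₀ *ᵥ x) ⬝ᵥ (P₀ *ᵥ x))
        ≤ Real.sqrt ((P₀.trace * P₀.trace) * (x ⬝ᵥ x)) := Real.sqrt_le_sqrt h1
      _ = P₀.trace * Real.sqrt (x ⬝ᵥ x) := by
          rw [Real.sqrt_mul (by positivity), Real.sqrt_mul_self hT.le]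
  -- the central quadratic inequality
  have hCS : ∀ x : Fin n → ℝ, x ⬝ᵥ (C *ᵥ x) ≤ (1 - η) * (x ⬝ᵥ (S *ᵥ x)) := by
    intro x
    set a := Real.sqrt ((K₀ *ᵥ x) ⬝ᵥ (K₀ *ᵥ x)) with ha
    set b := Real.sqrt (x ⬝ᵥ x) with hb
    have ha0 : 0 ≤ a := Real.sqrt_nonneg _
    have hb0 : 0 ≤ b := Real.sqrt_nonneg _
    have haa : a * a = (K₀ *ᵥ x) ⬝ᵥ (K₀ *ᵥ x) := Real.mul_self_sqrt (dot_self_nonneg _)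
    have hbb : b * b = x ⬝ᵥ x := Real.mul_self_sqrt (dot_self_nonneg _)
    have hup : (ΔB *ᵥ (K₀ *ᵥ x)) ⬝ᵥ (P₀ *ᵥ x) ≤ (ε * a) * (P₀.trace * b) := by
      calc (ΔB *ᵥ (K₀ *ᵥ x)) ⬝ᵥ (P₀ *ᵥ x)
          ≤ Real.sqrt ((ΔB *ᵥ (K₀ *ᵥ x)) ⬝ᵥ (ΔB *ᵥ (K₀ *ᵥ x))) *
            Real.sqrt ((P₀ *ᵥ x) ⬝ᵥ (P₀ *ᵥ x)) := dot_cs _ _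
        _ ≤ (ε * a) * (P₀.trace * b) := by
            apply mul_le_mul (hop _) (hPv _) (Real.sqrt_nonneg _) (by positivity)
    have hSx : q * (b * b) + r * (a * a) ≤ x ⬝ᵥ (S *ᵥ x) := by
      rw [hSquad, haa, hbb]
      have := hQlb x
      have := hRlb (K₀ *ᵥ x)
      linarith
    rw [hCquad, hη1]
    set sq := Real.sqrt q with hsq
    set sr := Real.sqrt r with hsr
    have hsq0 : 0 < sq := Real.sqrt_pos.mpr hq
    have hsr0 : 0 < sr := Real.sqrt_pos.mpr hr
    have hsqq : sq * sq = q := Real.mul_self_sqrt hq.le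
    have hsrr : sr * sr = r := Real.mul_self_sqrt hr.le
    have hqr : Real.sqrt (q * r) = sq * sr := Real.sqrt_mul hq.le r
    rw [hqr]
    set c := 2 * ε * P₀.trace / (sq * sr) with hc
    have hc0 : 0 ≤ c := by positivity
    have hcc : c * (sq * sr) = 2 * ε * P₀.trace := by
      rw [hc, div_mul_cancel₀ _ (by positivity)]
    have hd : sq * sq * (b * b) + sr * sr * (a * a) ≤ x ⬝ᵥ (S *ᵥ x) := by
      rw [hsqq, hsrr]; exact hSx
    have hcross : 0 ≤ c * ((sq * b - sr * a) * (sq * b - sr * a)) :=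
      mul_nonneg hc0 (mul_self_nonneg _)
    have hprod : c * (sq * sr) * (a * b) = 2 * ε * P₀.trace * (a * b) := by rw [hcc]
    have habT : 0 ≤ ε * P₀.trace * (a * b) := by positivity
    nlinarith [mul_le_mul_of_nonneg_left hd hc0, hup]
  -- positive semidefiniteness of (1-η)•S - C and positive definiteness of S - C
  have hSherm : Sᴴ = S := by
    rw [hSdef, Matrix.conjTranspose_eq_transpose_of_trivial]
    simp only [Matrix.transpose_add, Matrix.transpose_mul, Matrix.transpose_transpose,
      hQsym, hRsym, Matrix.mul_assoc]
  have hCherm : Cᴴ = C := by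
    rw [hCdef, Matrix.conjTranspose_eq_transpose_of_trivial]
    simp only [Matrix.transpose_add, Matrix.transpose_mul, Matrix.transpose_transpose,
      hPsym, Matrix.mul_assoc]
    abel
  have hNS : ((1 - η) • S - C).PosSemidef := by
    refine Matrix.PosSemidef.of_dotProduct_mulVec_nonneg ?_ ?_
    · show _ = _
      rw [Matrix.conjTranspose_sub, Matrix.conjTranspose_smul, hCherm, hSherm]
      norm_num
    · intro x
      have := hCS x
      simp only [star_trivial, Matrix.sub_mulVec, dotProduct_sub, Matrix.smul_mulVec,
        dotProduct_smul, smul_eq_mul]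
      linarith
  have hSpsd : S.PosSemidef := by
    refine Matrix.PosSemidef.of_dotProduct_mulVec_nonneg ?_ ?_
    · exact hSherm
    · intro x
      have h1 := hQlb x
      have h2 := hRlb (K₀ *ᵥ x)
      have h3 := dot_self_nonneg x
      have h4 := dot_self_nonneg (K₀ *ᵥ x)
      rw [star_trivial, hSquad]
      nlinarith
  have hNpd : (S - C).PosDef := by
    refine Matrix.PosDef.of_dotProduct_mulVec_pos ?_ ?_
    · show _ = _
      rw [Matrix.conjTranspose_sub, hCherm, hSherm]
    · intro x hx
      have h1 := hCS x
      have h2 := hQlb x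
      have h3 : 0 < x ⬝ᵥ x := by
        have := Matrix.dotProduct_star_self_pos_iff (v := x)
        rw [star_trivial] at this
        exact this.mpr hx
      have h4 : 0 < x ⬝ᵥ (S *ᵥ x) := by
        rw [hSquad]
        have h5 := hRlb (K₀ *ᵥ x)
        have h6 := dot_self_nonneg (K₀ *ᵥ x)
        nlinarith
      rw [star_trivial, Matrix.sub_mulVec, dotProduct_sub]
      nlinarith
  constructor
  · -- Hurwitz
    intro μ hμ
    obtain ⟨v, hv0, hv⟩ := spectrum_exists_eigenvector hμ
    set Acc := Ac.map Complex.ofReal with hAcc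
    set Pc := P₀.map Complex.ofReal with hPc
    set Nc := (S - C).map Complex.ofReal with hNc
    have hfun : (⇑Complex.ofRealHom : ℝ → ℂ) = Complex.ofReal := rfl
    have hmapkey : Accᵀ * Pc + Pc * Acc = -Nc := by
      have hkey' : Acᵀ * P₀ + P₀ * Ac = -(S - C) := by rw [hkey]; abel
      have h := congrArg (Complex.ofRealHom.mapMatrix (m := Fin n)) hkey'
      simp only [_root_.map_add, _root_.map_mul, _root_.map_neg,
        RingHom.mapMatrix_apply, hfun, Matrix.transpose_map] at h
      rw [hAcc, hPc, hNc]
      exact h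
    have hstar : Acc *ᵥ star v = star (Acc *ᵥ v) := by
      funext i
      simp only [Matrix.mulVec, dotProduct, Pi.star_apply, star_sum, star_mul',
        hAcc, Matrix.map_apply, RCLike.star_def, Complex.conj_ofReal]
    have e1 : star v ⬝ᵥ ((Acc)ᵀ *ᵥ (Pc *ᵥ v)) = (starRingEnd ℂ) μ * (star v ⬝ᵥ (Pc *ᵥ v)) := by
      rw [Matrix.dotProduct_mulVec, Matrix.vecMul_transpose, hstar, hv, star_smul,
        smul_dotProduct]
      simp [smul_eq_mul]
    have e2 : star v ⬝ᵥ (Pc *ᵥ (Acc *ᵥ v)) = μ * (star v ⬝ᵥ (Pc *ᵥ v)) := by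
      rw [hv, Matrix.mulVec_smul, dotProduct_smul]
      simp [smul_eq_mul]
    have heq : ((2 * μ.re : ℝ) : ℂ) * (star v ⬝ᵥ (Pc *ᵥ v)) = -(star v ⬝ᵥ (Nc *ᵥ v)) := by
      have h := congrArg (fun M => star v ⬝ᵥ (M *ᵥ v)) hmapkey
      simp only [Matrix.add_mulVec, dotProduct_add, Matrix.neg_mulVec, dotProduct_neg] at h
      rw [← Matrix.mulVec_mulVec, ← Matrix.mulVec_mulVec] at h
      rw [e1, e2] at h
      rw [← h, ← Complex.add_conj]
      ring
    have hpq : 0 < (star v ⬝ᵥ (Pc *ᵥ v)).re := pd_complex_quad hP₀ hv0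
    have hnn : 0 < (star v ⬝ᵥ (Nc *ᵥ v)).re := pd_complex_quad hNpd hv0
    have hre := congrArg Complex.re heq
    rw [Complex.re_ofReal_mul, Complex.neg_re] at hre
    nlinarith
  · -- cost bound
    intro W hW hLyap
    have hL2 : Ac * W + W * Acᵀ = -1 := by
      have h := hLyap
      rw [add_eq_zero_iff_eq_neg] at h
      exact h
    have hL3 : W * Acᵀ + Ac * W = -1 := by rw [add_comm]; exact hL2
    have htr1 : ((Acᵀ * P₀ + P₀ * Ac) * W).trace = -P₀.trace := by
      rw [Matrix.add_mul, Matrix.trace_add]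
      rw [Matrix.trace_mul_cycle Acᵀ P₀ W, Matrix.trace_mul_cycle W Acᵀ P₀]
      rw [Matrix.mul_assoc P₀ W Acᵀ, Matrix.mul_assoc P₀ Ac W, ← Matrix.trace_add,
        ← Matrix.mul_add, hL3]
      simp only [Matrix.mul_neg, Matrix.mul_one, Matrix.trace_neg]
    have htr2 : (C * W).trace - (S * W).trace = -P₀.trace := by
      rw [← Matrix.trace_sub, ← Matrix.sub_mul, ← hkey]
      exact htr1
    have htr3 : 0 ≤ (1 - η) * (S * W).trace - (C * W).trace := by
      have h := psd_trace_mul_nonneg hNS hW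
      rw [Matrix.sub_mul, Matrix.trace_sub, smul_mul_assoc, Matrix.trace_smul,
        smul_eq_mul] at h
      exact h
    rw [le_div_iff₀ hη0]
    linarith
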